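/- Let q ∈ ℂ with 0 < ‖q‖ < 1, let z, u ∈ ℂ with u² = z, and let A, B, C : ℤ/2ℤ → ℂ satisfy, for each j ∈ ℤ/2ℤ, the bilinear relation A_j·C_j = B_j² − u·A_{j+1}·C_{j+1}. Then: (i) for each j, (1 − z)·A_j·C_j = B_j² − u·B_{j+1}²; and (ii) with φ(x) := ∏_{n=1}^{∞}(1 − x·qⁿ)ⁿ, the dressed values Ã_j := φ(q·z)·A_j, B̃_j := φ(z)·B_j, C̃_j := φ(q^{−1}·z)·C_j satisfy Ã_j·C̃_j = B̃_j² − u·B̃_{j+1}² for each j ∈ ℤ/2ℤ. -/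

import Mathlib

/-- The double q-Pochhammer symbol `φ(u) = (qu; q, q)_∞ = ∏_{n=1}^∞ (1 - u·qⁿ)ⁿ`. -/
noncomputable def qPochDouble (q u : ℂ) : ℂ := ∏' n : ℕ, (1 - u * q ^ (n + 1)) ^ (n + 1)

open Complex

/-- An infinite product with a zero factor is zero. -/
lemma tprod_eq_zero_of_factor {f : ℕ → ℂ} (n0 : ℕ) (h : f n0 = 0) : ∏' n, f n = 0 := by
  have : HasProd f 0 := by
    rw [HasProd]
    refine Filter.Tendsto.congr' ?_ tendsto_const_nhds
    filter_upwards [Filter.eventually_ge_atTop ({n0} : Finset ℕ)] with s hs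
    exact (Finset.prod_eq_zero (hs (Finset.mem_singleton_self n0)) h).symm
  exact this.tprod_eq

lemma summable_aux (q z c : ℂ) (hq1 : ‖q‖ < 1) (k : ℕ) :
    Summable (fun n : ℕ => ((n : ℂ) + c) * Complex.log (1 - z * q ^ (n + k))) := by
  have hgeo : Summable (fun n : ℕ => ((n : ℝ) + ‖c‖) * (3 / 2 * ‖z‖ * ‖q‖ ^ k) * ‖q‖ ^ n) := by
    have h1 : Summable (fun n : ℕ => (n : ℝ) ^ 1 * ‖q‖ ^ n) :=
      summable_pow_mul_geometric_of_norm_lt_one 1 (by simpa using hq1)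
    have h2 : Summable (fun n : ℕ => ‖q‖ ^ n) :=
      summable_geometric_of_lt_one (norm_nonneg q) hq1
    have := (h1.add (h2.mul_left ‖c‖)).mul_left (3 / 2 * ‖z‖ * ‖q‖ ^ k)
    refine this.congr fun n => ?_
    ring
  refine Summable.of_norm (Summable.of_norm_bounded_eventually_nat hgeo ?_)
  have hq0 : 0 ≤ ‖q‖ := norm_nonneg q
  have hten : Filter.Tendsto (fun n : ℕ => ‖z‖ * ‖q‖ ^ k * ‖q‖ ^ n) Filter.atTop (nhds 0) := by
    simpa using (tendsto_pow_atTop_nhds_zero_of_lt_one hq0 hq1).const_mul (‖z‖ * ‖q‖ ^ k)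
  filter_upwards [hten.eventually_le_const (by norm_num : (0 : ℝ) < 1 / 2)] with n hn
  have hzq : ‖-(z * q ^ (n + k))‖ ≤ 1 / 2 := by
    rw [norm_neg, norm_mul, norm_pow, pow_add]
    calc ‖z‖ * (‖q‖ ^ n * ‖q‖ ^ k) = ‖z‖ * ‖q‖ ^ k * ‖q‖ ^ n := by ring
    _ ≤ 1 / 2 := hn
  have hlog : ‖Complex.log (1 - z * q ^ (n + k))‖ ≤ 3 / 2 * ‖-(z * q ^ (n + k))‖ := by
    have := Complex.norm_log_one_add_half_le_self hzq
    rwa [show (1 : ℂ) + -(z * q ^ (n + k)) = 1 - z * q ^ (n + k) by ring] at this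
  rw [norm_norm, norm_mul]
  have hnc : ‖(n : ℂ) + c‖ ≤ (n : ℝ) + ‖c‖ := by
    refine (norm_add_le _ _).trans ?_
    simp [Complex.norm_natCast]
  have hnn : (0 : ℝ) ≤ (n : ℝ) + ‖c‖ := by positivity
  calc ‖(n : ℂ) + c‖ * ‖Complex.log (1 - z * q ^ (n + k))‖
      ≤ ((n : ℝ) + ‖c‖) * (3 / 2 * ‖-(z * q ^ (n + k))‖) :=
        mul_le_mul hnc hlog (norm_nonneg _) hnn
    _ ≤ ((n : ℝ) + ‖c‖) * (3 / 2 * ‖z‖ * ‖q‖ ^ k) * ‖q‖ ^ n := by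
        rw [norm_neg, norm_mul, norm_pow, pow_add]; exact le_of_eq (by ring)

/-- The key identity `φ(qz)·φ(q⁻¹z) = (1 - z)·φ(z)²`. -/
lemma qPochDouble_key (q z : ℂ) (hq : q ≠ 0) (hq1 : ‖q‖ < 1) :
    qPochDouble q (q * z) * qPochDouble q (q⁻¹ * z) = (1 - z) * (qPochDouble q z) ^ 2 := by
  have hA : qPochDouble q (q * z) = ∏' n : ℕ, (1 - z * q ^ (n + 2)) ^ (n + 1) := by
    unfold qPochDouble
    congr 1; funext n; congr 2; ring
  have hC : qPochDouble q (q⁻¹ * z) = ∏' n : ℕ, (1 - z * q ^ n) ^ (n + 1) := by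
    unfold qPochDouble
    congr 1; funext n; congr 2
    rw [pow_succ]
    field_simp
  by_cases hz : ∃ m : ℕ, 1 - z * q ^ m = 0
  · obtain ⟨m, hm⟩ := hz
    have hLHS : qPochDouble q (q⁻¹ * z) = 0 := by
      rw [hC]
      exact tprod_eq_zero_of_factor m (by rw [hm, zero_pow (Nat.succ_ne_zero m)])
    rw [hLHS, mul_zero]
    rcases Nat.eq_zero_or_pos m with hm0 | hm0
    · subst hm0
      simp only [pow_zero, mul_one] at hm
      rw [show (1 : ℂ) - z = 0 by linear_combination hm, zero_mul]
    · obtain ⟨k, rfl⟩ := Nat.exists_eq_add_of_lt hm0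
      have : qPochDouble q z = 0 := by
        unfold qPochDouble
        refine tprod_eq_zero_of_factor k ?_
        rw [show (0 : ℕ) + k + 1 = k + 1 by ring] at hm
        rw [hm, zero_pow (Nat.succ_ne_zero k)]
      rw [this]; ring
  · push_neg at hz
    set l : ℕ → ℂ := fun n => Complex.log (1 - z * q ^ n) with hl
    have hexp : ∀ n : ℕ, Complex.exp (l n) = 1 - z * q ^ n := fun n => Complex.exp_log (hz n)
    -- summability
    have S2 : Summable (fun n : ℕ => ((n : ℂ) + 1) * l (n + 2)) := summable_aux q z 1 hq1 2
    have S1 : Summable (fun n : ℕ => ((n : ℂ) + 1) * l (n + 1)) := summable_aux q z 1 hq1 1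
    have S0 : Summable (fun n : ℕ => ((n : ℂ) + 1) * l n) := by
      simpa using summable_aux q z 1 hq1 0
    have Sg : Summable (fun n : ℕ => (n : ℂ) * l (n + 1)) := by
      simpa using summable_aux q z 0 hq1 1
    set T2 : ℂ := ∑' n : ℕ, ((n : ℂ) + 1) * l (n + 2) with hT2
    set T1 : ℂ := ∑' n : ℕ, ((n : ℂ) + 1) * l (n + 1) with hT1
    set T0 : ℂ := ∑' n : ℕ, ((n : ℂ) + 1) * l n with hT0
    have hfe : ∀ (k : ℕ),
        (cexp ∘ fun n : ℕ => ((n : ℂ) + 1) * l (n + k)) =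
          fun n : ℕ => (1 - z * q ^ (n + k)) ^ (n + 1) := by
      intro k
      funext n
      show Complex.exp (((n : ℂ) + 1) * l (n + k)) = _
      rw [show ((n : ℂ) + 1) = ((n + 1 : ℕ) : ℂ) by push_cast; ring,
        Complex.exp_nat_mul, hexp]
    have hPA : qPochDouble q (q * z) = Complex.exp T2 := by
      rw [hA]
      have := S2.hasSum.cexp
      rw [hfe 2] at this
      exact this.tprod_eq
    have hPB : qPochDouble q z = Complex.exp T1 := by
      unfold qPochDouble
      have := S1.hasSum.cexp
      rw [hfe 1] at this
      exact this.tprod_eq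
    have hPC : qPochDouble q (q⁻¹ * z) = Complex.exp T0 := by
      rw [hC]
      have hS0' : Summable (fun n : ℕ => ((n : ℂ) + 1) * l (n + 0)) := by simpa using S0
      have := hS0'.hasSum.cexp
      rw [hfe 0] at this
      have h1 : (∏' n : ℕ, (1 - z * q ^ (n + 0)) ^ (n + 1)) = Complex.exp
          (∑' n : ℕ, ((n : ℂ) + 1) * l (n + 0)) := this.tprod_eq
      simpa using h1
    -- sum identity : T2 + T0 = l 0 + 2 * T1
    have hA' : T2 = ∑' n : ℕ, (n : ℂ) * l (n + 1) := by
      rw [Summable.tsum_eq_zero_add Sg]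
      rw [Nat.cast_zero, zero_mul, zero_add]
      exact (tsum_congr fun n => by push_cast; ring_nf).symm
    have hC' : T0 = l 0 + ∑' n : ℕ, ((n : ℂ) + 2) * l (n + 1) := by
      rw [hT0, Summable.tsum_eq_zero_add S0, Nat.cast_zero, zero_add, one_mul]
      congr 1
      exact tsum_congr fun n => by push_cast [Nat.cast_add]; ring_nf
    have hS2' : Summable (fun n : ℕ => ((n : ℂ) + 2) * l (n + 1)) := summable_aux q z 2 hq1 1
    have hsum : T2 + T0 = l 0 + 2 * T1 := by
      rw [hA', hC', ← add_assoc, add_comm _ (l 0), add_assoc]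
      congr 1
      rw [← Summable.tsum_add Sg hS2', hT1, ← tsum_mul_left]
      exact tsum_congr fun n => by ring
    rw [hPA, hPB, hPC, ← Complex.exp_add, hsum, Complex.exp_add, hexp 0, pow_zero, mul_one,
      two_mul, Complex.exp_add, sq]

/-- Equivalence of the `Y^{2,2}` and `Y^{2,0}` bilinear equations: from the `Y^{2,2}`
relations `A_j·C_j = B_j² − u·A_{j+1}·C_{j+1}` one deduces
(i) `(1 − z)·A_j·C_j = B_j² − u·B_{j+1}²`, and (ii) the dressed tau-functions
`Ã_j = φ(qz)A_j`, `B̃_j = φ(z)B_j`, `C̃_j = φ(q⁻¹z)C_j` satisfy the `Y^{2,0}` relations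
`Ã_j·C̃_j = B̃_j² − u·B̃_{j+1}²`. -/
theorem Y22_equals_Y20 (q z u : ℂ) (hq0 : 0 < ‖q‖) (hq1 : ‖q‖ < 1) (hu : u ^ 2 = z)
    (A B C : ZMod 2 → ℂ)
    (hbil : ∀ j : ZMod 2, A j * C j = (B j) ^ 2 - u * A (j + 1) * C (j + 1))
    (tA tB tC : ZMod 2 → ℂ)
    (htA : ∀ j : ZMod 2, tA j = qPochDouble q (q * z) * A j)
    (htB : ∀ j : ZMod 2, tB j = qPochDouble q z * B j)
    (htC : ∀ j : ZMod 2, tC j = qPochDouble q (q⁻¹ * z) * C j) :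
    (∀ j : ZMod 2, (1 - z) * (A j * C j) = (B j) ^ 2 - u * (B (j + 1)) ^ 2) ∧
    (∀ j : ZMod 2, tA j * tC j = (tB j) ^ 2 - u * (tB (j + 1)) ^ 2) := by
  have hjj : ∀ j : ZMod 2, j + 1 + 1 = j := by decide
  have part1 : ∀ j : ZMod 2, (1 - z) * (A j * C j) = (B j) ^ 2 - u * (B (j + 1)) ^ 2 := by
    intro j
    have h1 := hbil j
    have h2 := hbil (j + 1)
    rw [hjj j] at h2
    linear_combination h1 - u * h2 + A j * C j * hu
  refine ⟨part1, fun j => ?_⟩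
  have hq : q ≠ 0 := by simpa using hq0.ne'
  have hkey := qPochDouble_key q z hq hq1
  rw [htA j, htC j, htB j, htB (j + 1)]
  linear_combination A j * C j * hkey + (qPochDouble q z) ^ 2 * part1 j
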